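/- Let (X,d) be a compact connected metric space and f : X → X an expansive homeomorphism. Then the following are equivalent: (1) f is topologically transitive and has the shadowing property; (2) f is topologically mixing and has the shadowing property; (3) f has the two-sided limit shadowing property with a gap; (4) f has the two-sided limit shadowing property. -/

import Mathlib

open Filter Topology

variable {X : Type*} [MetricSpace X]

/-- `f` is expansive, with some expansivity constant `ε > 0`. -/
def Expansive (f : X ≃ X) : Prop :=
  ∃ ε : ℝ, 0 < ε ∧ ∀ x y : X, (∀ n : ℤ, dist ((f ^ n) x) ((f ^ n) y) ≤ ε) → x = y

/-- `g` is topologically transitive. -/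
def TopologicallyTransitive (g : X → X) : Prop :=
  ∀ U V : Set X, IsOpen U → IsOpen V → U.Nonempty → V.Nonempty →
    ∃ N : ℕ, 0 < N ∧ (g^[N] '' U ∩ V).Nonempty

/-- `g` is topologically mixing. -/
def TopologicallyMixing (g : X → X) : Prop :=
  ∀ U V : Set X, IsOpen U → IsOpen V → U.Nonempty → V.Nonempty →
    ∃ N : ℕ, ∀ n : ℕ, N ≤ n → (g^[n] '' U ∩ V).Nonempty

/-- The (two-sided) shadowing property for a bijection `f`. -/
def ShadowingPropertyZ (f : X ≃ X) : Prop :=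
  ∀ ε : ℝ, 0 < ε → ∃ δ : ℝ, 0 < δ ∧ ∀ x : ℤ → X,
    (∀ i : ℤ, dist (f (x i)) (x (i + 1)) < δ) →
    ∃ y : X, ∀ i : ℤ, dist ((f ^ i) y) (x i) < ε

/-- A two-sided limit pseudo-orbit: `d(f(x i), x (i+1)) → 0` as `|i| → ∞`. -/
def IsTwoSidedLimitPseudoOrbit (f : X ≃ X) (x : ℤ → X) : Prop :=
  Tendsto (fun i : ℤ => dist (f (x i)) (x (i + 1))) cofinite (𝓝 0)

/-- The sequence `x` is two-sided limit shadowed with gap `K`. -/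
def TwoSidedLimitShadowedWithGap (f : X ≃ X) (x : ℤ → X) (K : ℤ) : Prop :=
  ∃ y : X,
    Tendsto (fun i : ℤ => dist ((f ^ i) y) (x i)) atBot (𝓝 0) ∧
    Tendsto (fun i : ℤ => dist ((f ^ (K + i)) y) (x i)) atTop (𝓝 0)

/-- `f` has the two-sided limit shadowing property with a gap. -/
def TwoSidedLimitShadowingWithGap (f : X ≃ X) : Prop :=
  ∃ N : ℕ, ∀ x : ℤ → X, IsTwoSidedLimitPseudoOrbit f x →
    ∃ K : ℤ, |K| ≤ (N : ℤ) ∧ TwoSidedLimitShadowedWithGap f x K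

/-- `f` has the two-sided limit shadowing property (gap `0`). -/
def TwoSidedLimitShadowing (f : X ≃ X) : Prop :=
  ∀ x : ℤ → X, IsTwoSidedLimitPseudoOrbit f x → TwoSidedLimitShadowedWithGap f x 0


set_option linter.unusedSectionVars false
set_option maxHeartbeats 1000000

namespace TSLSAux


variable (f : X ≃ X)

/-- zpow of a perm applied, successor law. -/
lemma zpow_succ_apply (i : ℤ) (x : X) : (f ^ (i + 1)) x = f ((f ^ i) x) := by
  rw [add_comm, zpow_add, zpow_one, Equiv.Perm.mul_apply]

lemma zpow_add_apply (i j : ℤ) (x : X) : (f ^ (i + j)) x = (f ^ i) ((f ^ j) x) := by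
  rw [zpow_add, Equiv.Perm.mul_apply]

lemma zpow_natCast_apply (n : ℕ) (x : X) : (f ^ (n : ℤ)) x = (⇑f)^[n] x := by
  induction n with
  | zero => simp
  | succ n ih =>
      have : ((n : ℤ) + 1) = ((n + 1 : ℕ) : ℤ) := by push_cast; ring
      rw [← this, zpow_succ_apply, ih, Function.iterate_succ_apply']

lemma zpow_neg_natCast_apply (n : ℕ) (x : X) :
    (f ^ (-(n : ℤ))) x = (⇑f.symm)^[n] x := by
  induction n generalizing x with
  | zero => simp
  | succ n ih =>
      have h : (-(↑(n+1) : ℤ)) = (-(n:ℤ)) + (-1) := by push_cast; ring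
      rw [h, zpow_add_apply, Function.iterate_succ_apply]
      have h1 : (f ^ (-1 : ℤ)) x = f.symm x := by rw [zpow_neg, zpow_one]; rfl
      rw [h1, ih]

variable (hf : Continuous ⇑f) (hf' : Continuous ⇑f.symm)

include hf hf' in
lemma continuous_zpow (i : ℤ) : Continuous fun x : X => (f ^ i) x := by
  rcases le_or_gt 0 i with h | h
  · obtain ⟨n, rfl⟩ := Int.eq_ofNat_of_zero_le h
    have : (fun x : X => (f ^ (n:ℤ)) x) = (⇑f)^[n] := by
      funext x; exact zpow_natCast_apply f n x
    rw [this]; exact Continuous.iterate hf n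
  · obtain ⟨n, rfl⟩ : ∃ n : ℕ, i = -(n:ℤ) := ⟨i.natAbs, by omega⟩
    have : (fun x : X => (f ^ (-(n:ℤ))) x) = (⇑f.symm)^[n] := by
      funext x; exact zpow_neg_natCast_apply f n x
    rw [this]; exact Continuous.iterate hf' n

variable [CompactSpace X]

include hf in
/-- uniform continuity modulus for `f`. -/
lemma unif_mod (δ : ℝ) (hδ : 0 < δ) :
    ∃ κ : ℝ, 0 < κ ∧ κ ≤ δ ∧ ∀ a b : X, dist a b < κ → dist (f a) (f b) < δ := by
  have hu : UniformContinuous ⇑f := CompactSpace.uniformContinuous_of_continuous hf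
  obtain ⟨κ, hκ, h⟩ := Metric.uniformContinuous_iff.mp hu δ hδ
  exact ⟨min κ δ, lt_min hκ hδ, min_le_right _ _,
    fun a b hab => h (lt_of_lt_of_le hab (min_le_left _ _))⟩

/-- sequential compactness. -/
lemma seq_compact (u : ℕ → X) :
    ∃ a : X, ∃ φ : ℕ → ℕ, StrictMono φ ∧ Tendsto (u ∘ φ) atTop (𝓝 a) := by
  obtain ⟨a, -, φ, hφ, h⟩ := IsCompact.tendsto_subseq (x := u) isCompact_univ
    (fun n => Set.mem_univ _)
  exact ⟨a, φ, hφ, h⟩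



variable (f : X ≃ X)

def IsChainSeg (δ : ℝ) (s : ℕ → X) (n : ℕ) : Prop :=
  ∀ t, t < n → dist (f (s t)) (s (t + 1)) < δ

def ChainConn (δ : ℝ) (p q : X) (n : ℕ) : Prop :=
  ∃ s : ℕ → X, s 0 = p ∧ s n = q ∧ IsChainSeg f δ s n

variable {f}

lemma iter_succ (m : ℕ) (u : X) : f ((⇑f)^[m] u) = (⇑f)^[m + 1] u :=
  (Function.iterate_succ_apply' (⇑f) m u).symm

lemma chain_pattern {δ : ℝ} {p q u' : X} {n : ℕ} (h2 : 2 ≤ n)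
    (h1 : dist (f p) u' < δ) (hmid : dist ((⇑f)^[n - 1] u') q < δ) :
    ChainConn f δ p q n := by
  have hn0 : n ≠ 0 := by omega
  refine ⟨fun t => if t = 0 then p else if t = n then q else (⇑f)^[t - 1] u',
    by simp, by simp [hn0], ?_⟩
  intro t ht
  rcases Nat.eq_zero_or_pos t with rfl | htpos
  · have : (1 : ℕ) ≠ 0 := one_ne_zero
    simp only [if_pos rfl]
    have hn1 : (1 : ℕ) ≠ n := by omega
    simpa [hn1] using h1
  · have ht0 : t ≠ 0 := by omega
    have htn : t ≠ n := by omega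
    rcases eq_or_ne (t + 1) n with h | h
    · -- last jump
      have : t - 1 + 1 = t := by omega
      simp only [if_neg ht0, if_neg htn, if_pos h]
      rw [iter_succ, this]
      have ht2 : t = n - 1 := by omega
      rw [ht2]; exact hmid
    · have h10 : t + 1 ≠ 0 := by omega
      simp only [if_neg ht0, if_neg htn, if_neg h10, if_neg h]
      rw [iter_succ]
      have hix : t - 1 + 1 = t + 1 - 1 := by omega
      rw [hix, dist_self]
      exact lt_of_le_of_lt dist_nonneg h1

lemma chain_trans {δ : ℝ} {p q r : X} {n m : ℕ}
    (h1 : ChainConn f δ p q n) (h2 : ChainConn f δ q r m) :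
    ChainConn f δ p r (n + m) := by
  obtain ⟨s1, hs10, hs1n, hs1⟩ := h1
  obtain ⟨s2, hs20, hs2m, hs2⟩ := h2
  refine ⟨fun t => if t ≤ n then s1 t else s2 (t - n), by simp [hs10], ?_, ?_⟩
  · rcases Nat.eq_zero_or_pos m with rfl | hm
    · simp only [Nat.add_zero, if_pos le_rfl, hs1n, ← hs2m, ← hs20]
    · have : ¬ (n + m ≤ n) := by omega
      simp only [if_neg this, Nat.add_sub_cancel_left, hs2m]
  · intro t ht
    rcases lt_or_ge t n with h | h
    · have h1' : t ≤ n := le_of_lt h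
      have h2' : t + 1 ≤ n := by omega
      simp only [if_pos h1', if_pos h2']
      exact hs1 t h
    · rcases eq_or_ne t n with rfl | hne
      · have h2' : ¬ (t + 1 ≤ t) := by omega
        simp only [if_pos le_rfl, if_neg h2', Nat.add_sub_cancel_left, hs1n, ← hs20]
        exact hs2 0 (by omega)
      · have h1' : ¬ (t ≤ n) := by omega
        have h2' : ¬ (t + 1 ≤ n) := by omega
        simp only [if_neg h1', if_neg h2']
        have : t + 1 - n = (t - n) + 1 := by omega
        rw [this]
        exact hs2 (t - n) (by omega)

lemma chain_orbit_to {δ : ℝ} {x a : X} {n : ℕ} (h1 : 1 ≤ n)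
    (h : dist ((⇑f)^[n] x) a < δ) (hδ : 0 < δ) :
    ChainConn f δ x a n := by
  have h0n : 0 ≠ n := by omega
  refine ⟨fun t => if t = n then a else (⇑f)^[t] x, by simp [h0n], by simp, ?_⟩
  intro t ht
  have ht' : t ≠ n := by omega
  rcases eq_or_ne (t + 1) n with h' | h'
  · simp only [if_neg ht', if_pos h']
    rw [iter_succ, h']
    exact h
  · simp only [if_neg ht', if_neg h']
    rw [iter_succ, dist_self]
    exact hδ

lemma chain_update_end {δ : ℝ} {p q : X} {n : ℕ}
    (h : ChainConn f δ p q n) (hn : 1 ≤ n) :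
    ∃ ρ : ℝ, 0 < ρ ∧ ∀ q', dist q q' < ρ → ChainConn f δ p q' n := by
  obtain ⟨s, hs0, hsn, hs⟩ := h
  refine ⟨δ - dist (f (s (n-1))) (s n), ?_, ?_⟩
  · have := hs (n-1) (by omega)
    have hrw : n - 1 + 1 = n := by omega
    rw [hrw] at this; linarith
  · intro q' hq'
    refine ⟨Function.update s n q', ?_, by simp, ?_⟩
    · rw [Function.update_of_ne (by omega) _ _]; exact hs0
    · intro t ht
      rcases eq_or_ne (t + 1) n with h' | h'
      · have ht' : t ≠ n := by omega
        rw [Function.update_of_ne ht', h', Function.update_self]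
        have h2 := hs (n-1) (by omega)
        have hrw : n - 1 + 1 = n := by omega
        rw [hrw] at h2
        have htt : t = n - 1 := by omega
        rw [htt]
        rw [hsn] at h2
        rw [hsn] at hq'
        calc dist (f (s (n-1))) q' ≤ dist (f (s (n-1))) q + dist q q' := by
              have := dist_triangle (f (s (n-1))) q q'
              exact this
          _ < δ := by linarith
      · have ht' : t ≠ n := by omega
        rw [Function.update_of_ne ht', Function.update_of_ne h']
        exact hs t ht

lemma chain_extend {δ : ℝ} {p q : X} {n : ℕ} (hδ : 0 < δ)
    (h : ChainConn f δ p q n) : ChainConn f δ p (f q) (n + 1) := by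
  obtain ⟨s, hs0, hsn, hs⟩ := h
  refine ⟨fun t => if t = n + 1 then f q else s t, by simp [hs0], by simp, ?_⟩
  intro t ht
  rcases eq_or_ne (t + 1) (n + 1) with h' | h'
  · have ht' : t ≠ n + 1 := by omega
    have htn : t = n := by omega
    simp only [if_neg ht', if_pos h', htn, hsn]
    simpa using hδ
  · have ht' : t ≠ n + 1 := by omega
    simp only [if_neg ht', if_neg h']
    exact hs t (by omega)


section S3

variable {X : Type*} [MetricSpace X] {f : X ≃ X}

/-- Embed a finite chain into a two-sided pseudo-orbit and shadow it. -/
lemma shadow_conn (SH : ShadowingPropertyZ f) {ε : ℝ} (hε : 0 < ε) :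
    ∃ δ : ℝ, 0 < δ ∧ ∀ p q : X, ∀ n : ℕ, 1 ≤ n → ChainConn f δ p q n →
      ∃ y : X, dist y p < ε ∧ dist ((f ^ (n : ℤ)) y) q < ε := by
  obtain ⟨δ, hδ, hsh⟩ := SH ε hε
  refine ⟨δ, hδ, ?_⟩
  rintro p q n hn ⟨s, hs0, hsn, hs⟩
  set z : ℤ → X := fun i => if i < 0 then (f ^ i) p else if i < (n : ℤ) then s i.toNat
    else (f ^ (i - n)) q with hz
  have hpo : ∀ i : ℤ, dist (f (z i)) (z (i + 1)) < δ := by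
    intro i
    rcases lt_or_ge i (-1 : ℤ) with h | h
    · have h1 : i < 0 := by omega
      have h2 : i + 1 < 0 := by omega
      simp only [hz, if_pos h1, if_pos h2]
      rw [zpow_succ_apply f i p, dist_self]
      exact hδ
    · rcases eq_or_lt_of_le h with rfl | h
      · have h1 : (-1 : ℤ) < 0 := by omega
        have h2 : ¬ ((-1 : ℤ) + 1 < 0) := by omega
        have h3 : (-1 : ℤ) + 1 < (n : ℤ) := by omega
        simp only [hz, if_pos h1, if_neg h2, if_pos h3]
        have : ((-1 : ℤ) + 1).toNat = 0 := by decide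
        rw [this, hs0, ← zpow_succ_apply f (-1) p]
        simp [dist_self, hδ]
      · -- i ≥ 0
        have h0 : (0 : ℤ) ≤ i := by omega
        have h1 : ¬ (i < 0) := by omega
        have h2 : ¬ (i + 1 < 0) := by omega
        rcases lt_or_ge i (n : ℤ) with h3 | h3
        · have h4 : i + 1 ≤ (n : ℤ) := by omega
          have htn : i.toNat < n := by omega
          rcases eq_or_lt_of_le h4 with he | hlt
          · -- i + 1 = n
            have h5 : ¬ (i + 1 < (n : ℤ)) := by omega
            simp only [hz, if_neg h1, if_pos h3, if_neg h2, if_neg h5]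
            have : i + 1 - (n : ℤ) = 0 := by omega
            rw [this]
            have hq : (f ^ (0 : ℤ)) q = q := by simp
            rw [hq]
            have := hs i.toNat htn
            rw [← hsn]
            have hnn : i.toNat + 1 = n := by omega
            rw [← hnn]
            exact this
          · have h5 : i + 1 < (n : ℤ) := hlt
            simp only [hz, if_neg h1, if_pos h3, if_neg h2, if_pos h5]
            have : (i + 1).toNat = i.toNat + 1 := by omega
            rw [this]
            exact hs i.toNat htn
        · have h4 : ¬ (i < (n : ℤ)) := by omega
          have h5 : ¬ (i + 1 < (n : ℤ)) := by omega
          simp only [hz, if_neg h1, if_neg h4, if_neg h2, if_neg h5]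
          have : i + 1 - (n : ℤ) = (i - n) + 1 := by ring
          rw [this, zpow_succ_apply f (i - n) q, dist_self]
          exact hδ
  obtain ⟨y, hy⟩ := hsh z hpo
  refine ⟨y, ?_, ?_⟩
  · have := hy 0
    have hz0 : z 0 = p := by
      simp only [hz]
      have h1 : ¬ ((0:ℤ) < 0) := by omega
      have h2 : (0:ℤ) < (n:ℤ) := by omega
      simp only [if_neg h1, if_pos h2]
      simpa using hs0
    rw [hz0] at this
    simpa using this
  · have := hy (n : ℤ)
    have hzn : z (n : ℤ) = q := by
      simp only [hz]
      have h1 : ¬ ((n:ℤ) < 0) := by omega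
      have h2 : ¬ ((n:ℤ) < (n:ℤ)) := by omega
      simp only [if_neg h1, if_neg h2, sub_self]
      simp
    rwa [hzn] at this

lemma transitive_of_chains (SH : ShadowingPropertyZ f)
    (hCT : ∀ δ : ℝ, 0 < δ → ∀ p q : X, ∃ n, 1 ≤ n ∧ ChainConn f δ p q n) :
    TopologicallyTransitive ⇑f := by
  intro U V hU hV ⟨x, hx⟩ ⟨v, hv⟩
  obtain ⟨rx, hrx, hxU⟩ := Metric.isOpen_iff.mp hU x hx
  obtain ⟨rv, hrv, hvV⟩ := Metric.isOpen_iff.mp hV v hv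
  have hε : 0 < min rx rv := lt_min hrx hrv
  obtain ⟨δ, hδ, hsc⟩ := shadow_conn SH hε
  obtain ⟨n, hn, hchain⟩ := hCT δ hδ x v
  obtain ⟨y, hy1, hy2⟩ := hsc x v n hn hchain
  refine ⟨n, hn, ⟨(⇑f)^[n] y, ⟨y, hxU ?_, rfl⟩, hvV ?_⟩⟩
  · exact Metric.mem_ball.mpr (lt_of_lt_of_le hy1 (min_le_left _ _))
  · rw [Metric.mem_ball, ← zpow_natCast_apply f n y]
    exact lt_of_lt_of_le hy2 (min_le_right _ _)

lemma mixing_of_chains (SH : ShadowingPropertyZ f)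
    (hCM : ∀ δ : ℝ, 0 < δ → ∀ p q : X, ∃ M : ℕ, ∀ n, M ≤ n → ChainConn f δ p q n) :
    TopologicallyMixing ⇑f := by
  intro U V hU hV ⟨x, hx⟩ ⟨v, hv⟩
  obtain ⟨rx, hrx, hxU⟩ := Metric.isOpen_iff.mp hU x hx
  obtain ⟨rv, hrv, hvV⟩ := Metric.isOpen_iff.mp hV v hv
  have hε : 0 < min rx rv := lt_min hrx hrv
  obtain ⟨δ, hδ, hsc⟩ := shadow_conn SH hε
  obtain ⟨M, hM⟩ := hCM δ hδ x v
  refine ⟨M + 1, fun n hn => ?_⟩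
  obtain ⟨y, hy1, hy2⟩ := hsc x v n (by omega) (hM n (by omega))
  refine ⟨(⇑f)^[n] y, ⟨y, hxU ?_, rfl⟩, hvV ?_⟩
  · exact Metric.mem_ball.mpr (lt_of_lt_of_le hy1 (min_le_left _ _))
  · rw [Metric.mem_ball, ← zpow_natCast_apply f n y]
    exact lt_of_lt_of_le hy2 (min_le_right _ _)

end S3

section S4

variable {X : Type*} [MetricSpace X] {f : X ≃ X}

lemma chain_exists [CompactSpace X] (hf : Continuous ⇑f)
    (htr : TopologicallyTransitive ⇑f) {δ : ℝ} (hδ : 0 < δ) (p q : X) :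
    ∃ n, 1 ≤ n ∧ ChainConn f δ p q n := by
  obtain ⟨κ, hκ, hκδ, hκf⟩ := unif_mod f hf (δ/2) (half_pos hδ)
  obtain ⟨N, hN, w, ⟨u, hu, rfl⟩, hwV⟩ := htr (Metric.ball p κ) (Metric.ball q (δ/2))
    Metric.isOpen_ball Metric.isOpen_ball ⟨p, Metric.mem_ball_self hκ⟩
    ⟨q, Metric.mem_ball_self (half_pos hδ)⟩
  have hup : dist p u < κ := by rw [dist_comm]; exact Metric.mem_ball.mp hu
  have hfpu : dist (f p) (f u) < δ/2 := hκf p u hup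
  have hNq : dist ((⇑f)^[N] u) q < δ/2 := Metric.mem_ball.mp hwV
  rcases eq_or_lt_of_le (show 1 ≤ N from hN) with h1 | h2
  · -- N = 1
    refine ⟨1, le_rfl, ⟨fun t => if t = 0 then p else q, by simp, by simp, ?_⟩⟩
    intro t ht
    have : t = 0 := by omega
    subst this
    simp only [if_pos rfl, if_neg one_ne_zero]
    have : (⇑f)^[N] u = f u := by rw [← h1]; simp
    rw [this] at hNq
    calc dist (f p) q ≤ dist (f p) (f u) + dist (f u) q := dist_triangle _ _ _
      _ < δ := by linarith
  · refine ⟨N, hN, chain_pattern (by omega) (lt_of_lt_of_le hfpu (by linarith)) ?_⟩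
    have : (⇑f)^[N - 1] (f u) = (⇑f)^[N] u := by
      rw [← Function.iterate_succ_apply]
      congr 1; omega
    rw [this]
    exact lt_of_lt_of_le hNq (by linarith)

lemma semigroup_all_large {S : Set ℕ} (hadd : ∀ a ∈ S, ∀ b ∈ S, a + b ∈ S) {t : ℕ}
    (ht1 : 1 ≤ t) (ht : t ∈ S) (ht' : t + 1 ∈ S) : ∀ n, t * t ≤ n → n ∈ S := by
  have hmul : ∀ m, 1 ≤ m → ∀ a ∈ S, m * a ∈ S := by
    intro m hm a ha
    induction m with
    | zero => omega
    | succ k ih =>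
        rcases Nat.eq_zero_or_pos k with rfl | hk
        · simpa using ha
        · have := hadd a ha _ (ih hk)
          have hrw : (k + 1) * a = a + k * a := by ring
          rwa [hrw]
  intro n hn
  set r := n % t with hr
  set s := n / t with hs
  have hmod : t * s + r = n := Nat.div_add_mod n t
  have hrt : r < t := Nat.mod_lt _ (by omega)
  have hst : t ≤ s := by
    rw [hs, Nat.le_div_iff_mul_le (by omega : 0 < t)]
    nlinarith
  have hsr : r ≤ s := by omega
  have key : n = (s - r) * t + r * (t + 1) := by
    have h1 : (s - r) * t = s * t - r * t := by
      rw [Nat.sub_mul]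
    have h2 : r * (t+1) = r * t + r := by ring
    have h3 : r * t ≤ s * t := Nat.mul_le_mul_right _ hsr
    have hts : t * s = s * t := mul_comm t s
    omega
  rcases Nat.eq_zero_or_pos r with hr0 | hr1
  · rw [key, hr0]
    simpa [hr0] using hmul (s - 0) (by omega) t ht
  · rw [key]
    exact hadd _ (hmul (s - r) (by omega) t ht) _ (hmul r (by omega) (t+1) ht')

lemma exists_cycle_succ [CompactSpace X] [ConnectedSpace X] (hf : Continuous ⇑f)
    (htr : TopologicallyTransitive ⇑f) {δ : ℝ} (hδ : 0 < δ) (x₀ : X) :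
    ∃ t, 1 ≤ t ∧ (1 ≤ t ∧ ChainConn f δ x₀ x₀ t) ∧
      (1 ≤ t + 1 ∧ ChainConn f δ x₀ x₀ (t + 1)) := by
  classical
  set S : Set ℕ := {s | 1 ≤ s ∧ ChainConn f δ x₀ x₀ s} with hS
  have hadd : ∀ a ∈ S, ∀ b ∈ S, a + b ∈ S := by
    rintro a ⟨ha1, ha2⟩ b ⟨hb1, hb2⟩
    exact ⟨by omega, chain_trans ha2 hb2⟩
  obtain ⟨s₀, hs₀1, hs₀2⟩ := chain_exists hf htr hδ x₀ x₀
  have hs₀ : s₀ ∈ S := ⟨hs₀1, hs₀2⟩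
  -- the subgroup generated by S
  set H : AddSubgroup ℤ := AddSubgroup.closure ((fun s : ℕ => (s : ℤ)) '' S) with hH
  obtain ⟨g, hg⟩ := Int.subgroup_cyclic H
  set k : ℕ := g.natAbs with hk
  have hmemH : ∀ z : ℤ, z ∈ H ↔ (k : ℤ) ∣ z := by
    intro z
    rw [hg, AddSubgroup.mem_closure_singleton, Int.natAbs_dvd]
    constructor
    · rintro ⟨n, rfl⟩
      exact ⟨n, by rw [smul_eq_mul, mul_comm]⟩
    · rintro ⟨n, rfl⟩
      exact ⟨n, by rw [smul_eq_mul, mul_comm]⟩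
  have hSH : ∀ s ∈ S, (s : ℤ) ∈ H := by
    intro s hsS
    exact AddSubgroup.subset_closure ⟨s, hsS, rfl⟩
  have hk0 : k ≠ 0 := by
    intro h0
    have hd := (hmemH (s₀ : ℤ)).mp (hSH s₀ hs₀)
    rw [h0] at hd
    simp at hd
    omega
  have hdvd : ∀ s ∈ S, k ∣ s := by
    intro s hsS
    have : (k : ℤ) ∣ (s : ℤ) := (hmemH (s : ℤ)).mp (hSH s hsS)
    exact_mod_cast this
  rcases eq_or_lt_of_le (by omega : 1 ≤ k) with hk1 | hk2
  · -- k = 1 : extract t, t+1 ∈ S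
    -- the subgroup H consists of differences of elements of S ∪ {0}
    set R : AddSubgroup ℤ :=
      { carrier := {z : ℤ | ∃ a b : ℕ, (a ∈ S ∨ a = 0) ∧ (b ∈ S ∨ b = 0) ∧ z = (a : ℤ) - b}
        zero_mem' := ⟨0, 0, Or.inr rfl, Or.inr rfl, by simp⟩
        add_mem' := by
          rintro z w ⟨a, b, ha, hb, rfl⟩ ⟨a', b', ha', hb', rfl⟩
          refine ⟨a + a', b + b', ?_, ?_, by push_cast; ring⟩
          · rcases ha with ha | rfl
            · rcases ha' with ha' | rfl
              · exact Or.inl (hadd a ha a' ha')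
              · simpa using Or.inl ha
            · simpa using ha'
          · rcases hb with hb | rfl
            · rcases hb' with hb' | rfl
              · exact Or.inl (hadd b hb b' hb')
              · simpa using Or.inl hb
            · simpa using hb'
        neg_mem' := by
          rintro z ⟨a, b, ha, hb, rfl⟩
          exact ⟨b, a, hb, ha, by ring⟩ } with hR
    have hHR : H ≤ R := by
      rw [hH]
      apply (AddSubgroup.closure_le _).mpr
      rintro z ⟨s, hsS, rfl⟩
      exact ⟨s, 0, Or.inl hsS, Or.inr rfl, by simp⟩
    have h1H : (1 : ℤ) ∈ H := (hmemH 1).mpr (by rw [← hk1]; exact one_dvd 1)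
    obtain ⟨a, b, ha, hb, hab⟩ := hHR h1H
    have hab' : a = b + 1 := by omega
    rcases hb with hb | rfl
    · -- b ∈ S, a = b + 1 ∈ S
      have haS : a ∈ S := by
        rcases ha with ha | rfl
        · exact ha
        · omega
      rw [hab'] at haS
      exact ⟨b, hb.1, hb, haS⟩
    · -- b = 0, a = 1 ∈ S
      have haS : (1 : ℕ) ∈ S := by
        rcases ha with ha | rfl
        · rwa [show a = 1 by omega] at ha
        · omega
      exact ⟨1, le_rfl, haS, hadd 1 haS 1 haS⟩
  · -- k ≥ 2 : contradiction with connectedness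
    exfalso
    set A : Set X := {y | ∃ n, 1 ≤ n ∧ ChainConn f δ x₀ y n ∧ k ∣ n} with hA
    set B : Set X := {y | ∃ n, 1 ≤ n ∧ ChainConn f δ x₀ y n ∧ ¬ k ∣ n} with hB
    have hAopen : IsOpen A := by
      rw [Metric.isOpen_iff]
      rintro y ⟨n, hn1, hc, hd⟩
      obtain ⟨ρ, hρ, hup⟩ := chain_update_end hc hn1
      exact ⟨ρ, hρ, fun y' hy' => ⟨n, hn1, hup y' (by rw [dist_comm]; exact hy'), hd⟩⟩
    have hBopen : IsOpen B := by
      rw [Metric.isOpen_iff]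
      rintro y ⟨n, hn1, hc, hd⟩
      obtain ⟨ρ, hρ, hup⟩ := chain_update_end hc hn1
      exact ⟨ρ, hρ, fun y' hy' => ⟨n, hn1, hup y' (by rw [dist_comm]; exact hy'), hd⟩⟩
    have hcover : A ∪ B = Set.univ := by
      apply Set.eq_univ_of_forall
      intro y
      obtain ⟨n, hn1, hc⟩ := chain_exists hf htr hδ x₀ y
      by_cases hd : k ∣ n
      · exact Or.inl ⟨n, hn1, hc, hd⟩
      · exact Or.inr ⟨n, hn1, hc, hd⟩
    have hdisj : A ∩ B = ∅ := by
      rw [Set.eq_empty_iff_forall_notMem]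
      rintro y ⟨⟨n₁, hn₁, hc₁, hd₁⟩, ⟨n₂, hn₂, hc₂, hd₂⟩⟩
      obtain ⟨m, hm1, hcm⟩ := chain_exists hf htr hδ y x₀
      have h1 : n₁ + m ∈ S := ⟨by omega, chain_trans hc₁ hcm⟩
      have h2 : n₂ + m ∈ S := ⟨by omega, chain_trans hc₂ hcm⟩
      have hd1' := hdvd _ h1
      have hd2' := hdvd _ h2
      have hdm : k ∣ m := by
        have := Nat.dvd_sub hd1' hd₁
        simpa using this
      exact hd₂ (by
        have := Nat.dvd_sub hd2' hdm
        simpa using this)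
    have hx₀A : x₀ ∈ A := ⟨s₀, hs₀1, hs₀2, hdvd _ hs₀⟩
    have hfx₀B : f x₀ ∈ B := by
      refine ⟨s₀ + 1, by omega, chain_extend hδ hs₀2, ?_⟩
      intro hcon
      have := Nat.dvd_sub hcon (hdvd _ hs₀)
      simp at this
      omega
    have hclopen : IsClopen A := by
      constructor
      · rw [← isOpen_compl_iff]
        have : Aᶜ = B := by
          rw [Set.eq_empty_iff_forall_notMem] at hdisj
          ext y
          constructor
          · intro hy
            have := Set.eq_univ_iff_forall.mp hcover y
            rcases this with h | h
            · exact absurd h hy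
            · exact h
          · intro hy hyA
            exact hdisj y ⟨hyA, hy⟩
        rw [this]
        exact hBopen
      · exact hAopen
    rcases isClopen_iff.mp hclopen with h | h
    · rw [h] at hx₀A; exact hx₀A
    · have : f x₀ ∈ A := by rw [h]; trivial
      rw [Set.eq_empty_iff_forall_notMem] at hdisj
      exact hdisj (f x₀) ⟨this, hfx₀B⟩

lemma chainmixing_of_transitive [CompactSpace X] [ConnectedSpace X] (hf : Continuous ⇑f)
    (htr : TopologicallyTransitive ⇑f) {δ : ℝ} (hδ : 0 < δ) (p q : X) :
    ∃ M : ℕ, ∀ n, M ≤ n → ChainConn f δ p q n := by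
  have hne : Nonempty X := inferInstance
  set x₀ : X := Classical.arbitrary X with hx₀
  obtain ⟨t, ht1, ⟨_, htc⟩, ⟨_, htc'⟩⟩ := exists_cycle_succ hf htr hδ x₀
  have hall := semigroup_all_large (S := {s | 1 ≤ s ∧ ChainConn f δ x₀ x₀ s})
    (by rintro a ⟨ha1, ha2⟩ b ⟨hb1, hb2⟩; exact ⟨by omega, chain_trans ha2 hb2⟩)
    ht1 ⟨ht1, htc⟩ ⟨by omega, htc'⟩
  obtain ⟨l₀, hl₀1, hl₀⟩ := chain_exists hf htr hδ p x₀
  obtain ⟨l₁, hl₁1, hl₁⟩ := chain_exists hf htr hδ x₀ q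
  refine ⟨l₀ + (t * t + 1) + l₁, fun n hn => ?_⟩
  set mid := n - l₀ - l₁ with hmid
  have hmid1 : t * t ≤ mid := by omega
  obtain ⟨-, hmidc⟩ := hall mid hmid1
  have heq : l₀ + mid + l₁ = n := by omega
  rw [← heq]
  exact chain_trans (chain_trans hl₀ hmidc) hl₁

end S4

section S5

variable {X : Type*} [MetricSpace X] {f : X ≃ X}

lemma dist_dist_zero (a b : X) : dist (dist a b) (0 : ℝ) = dist a b := by
  rw [dist_zero_right, Real.norm_eq_abs, abs_of_nonneg dist_nonneg]

lemma tendsto_cofinite_of_finite {g : ℤ → ℝ} (hg : ∀ i, 0 ≤ g i)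
    (h : ∀ ε : ℝ, 0 < ε → {i : ℤ | ¬ g i < ε}.Finite) :
    Filter.Tendsto g Filter.cofinite (𝓝 0) := by
  rw [Metric.tendsto_nhds]
  intro ε hε
  rw [Filter.eventually_cofinite]
  have : {i : ℤ | ¬ dist (g i) 0 < ε} = {i : ℤ | ¬ g i < ε} := by
    ext i
    rw [Set.mem_setOf_eq, Set.mem_setOf_eq, dist_zero_right, Real.norm_eq_abs,
      abs_of_nonneg (hg i)]
  rw [this]
  exact h ε hε

lemma finite_natAbs_bound {s : Set ℤ} (hs : s.Finite) :
    ∃ M : ℕ, ∀ i : ℤ, M ≤ i.natAbs → i ∉ s := by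
  obtain ⟨u, hu⟩ := hs.bddAbove
  obtain ⟨l, hl⟩ := hs.bddBelow
  refine ⟨u.natAbs + l.natAbs + 1, fun i hi his => ?_⟩
  have h1 : i ≤ u := hu his
  have h2 : l ≤ i := hl his
  omega

/-- From a limit pseudo-orbit: tails have small jumps. -/
lemma tail_small {x : ℤ → X} (hx : IsTwoSidedLimitPseudoOrbit f x) {η : ℝ} (hη : 0 < η) :
    ∃ M : ℕ, ∀ i : ℤ, M ≤ i.natAbs → dist (f (x i)) (x (i + 1)) < η := by
  have := (Metric.tendsto_nhds.mp hx η hη)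
  rw [Filter.eventually_cofinite] at this
  obtain ⟨M, hM⟩ := finite_natAbs_bound this
  refine ⟨M, fun i hi => ?_⟩
  have := hM i hi
  simp only [Set.mem_setOf_eq, not_not] at this
  rwa [dist_dist_zero] at this

def OmegaPt (f : X ≃ X) (x a : X) : Prop :=
  ∀ κ : ℝ, 0 < κ → ∀ n₀ : ℤ, ∃ n : ℤ, n₀ ≤ n ∧ dist ((f ^ n) x) a < κ

def AlphaPt (f : X ≃ X) (v b : X) : Prop :=
  ∀ κ : ℝ, 0 < κ → ∀ n₀ : ℤ, ∃ n : ℤ, n ≤ n₀ ∧ dist ((f ^ n) v) b < κ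

lemma exists_omegaPt [CompactSpace X] (x : X) : ∃ a, OmegaPt f x a := by
  obtain ⟨a, φ, hφ, hten⟩ := seq_compact (fun n : ℕ => (f ^ (n : ℤ)) x)
  refine ⟨a, fun κ hκ n₀ => ?_⟩
  obtain ⟨l₀, hl₀⟩ := (Metric.tendsto_atTop.mp hten κ hκ)
  set l := max l₀ n₀.toNat with hl
  refine ⟨(φ l : ℤ), ?_, hl₀ l (le_max_left _ _)⟩
  have : l ≤ φ l := hφ.le_apply
  omega

lemma exists_alphaPt [CompactSpace X] (v : X) : ∃ b, AlphaPt f v b := by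
  obtain ⟨b, φ, hφ, hten⟩ := seq_compact (fun n : ℕ => (f ^ (-(n : ℤ))) v)
  refine ⟨b, fun κ hκ n₀ => ?_⟩
  obtain ⟨l₀, hl₀⟩ := (Metric.tendsto_atTop.mp hten κ hκ)
  set l := max l₀ (-n₀).toNat with hl
  refine ⟨-(φ l : ℤ), ?_, hl₀ l (le_max_left _ _)⟩
  have : l ≤ φ l := hφ.le_apply
  omega

lemma omegaPt_shift [CompactSpace X] (hf : Continuous ⇑f) (hf' : Continuous ⇑f.symm) {x a : X}
    (h : OmegaPt f x a) (i : ℤ) : OmegaPt f x ((f ^ i) a) := by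
  intro κ hκ n₀
  obtain ⟨κ', hκ', hκ'f⟩ := Metric.continuous_iff.mp (continuous_zpow f hf hf' i) a κ hκ
  obtain ⟨n, hn, hd⟩ := h κ' hκ' (n₀ - i)
  refine ⟨i + n, by omega, ?_⟩
  rw [zpow_add_apply]
  exact hκ'f _ hd

lemma alphaPt_shift [CompactSpace X] (hf : Continuous ⇑f) (hf' : Continuous ⇑f.symm) {v b : X}
    (h : AlphaPt f v b) (i : ℤ) : AlphaPt f v ((f ^ i) b) := by
  intro κ hκ n₀
  obtain ⟨κ', hκ', hκ'f⟩ := Metric.continuous_iff.mp (continuous_zpow f hf hf' i) b κ hκ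
  obtain ⟨n, hn, hd⟩ := h κ' hκ' (n₀ - i)
  refine ⟨i + n, by omega, ?_⟩
  rw [zpow_add_apply]
  exact hκ'f _ hd

lemma chain_to_omegaPt [CompactSpace X] {x a : X} (h : OmegaPt f x a) {δ : ℝ} (hδ : 0 < δ) (n₀ : ℕ) :
    ∃ n : ℕ, n₀ ≤ n ∧ 1 ≤ n ∧ ChainConn f δ x a n := by
  obtain ⟨n, hn, hd⟩ := h δ hδ (max n₀ 1)
  refine ⟨n.toNat, by omega, by omega, chain_orbit_to (by omega) ?_ hδ⟩
  rwa [← zpow_natCast_apply f n.toNat x, (by omega : (n.toNat : ℤ) = n)]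

lemma chain_from_alphaPt [CompactSpace X] (hf : Continuous ⇑f) {v b : X}
    (h : AlphaPt f v b) {δ : ℝ} (hδ : 0 < δ) (n₀ : ℕ) :
    ∃ n : ℕ, n₀ ≤ n ∧ 1 ≤ n ∧ ChainConn f δ b v n := by
  obtain ⟨κ, hκ, hκδ, hκf⟩ := unif_mod f hf δ hδ
  obtain ⟨m, hm, hd⟩ := h κ hκ (-(max n₀ 2 : ℕ))
  set n : ℕ := (-m).toNat with hn
  have hnm : (n : ℤ) = -m := by omega
  refine ⟨n, by omega, by omega, chain_pattern (n := n) (u' := (f ^ (m + 1)) v) (by omega) ?_ ?_⟩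
  · have h1 : dist b ((f ^ m) v) < κ := by rw [dist_comm]; exact hd
    have := hκf b ((f ^ m) v) h1
    rwa [← zpow_succ_apply] at this
  · have hrw : (⇑f)^[n - 1] ((f ^ (m + 1)) v) = (f ^ (((n:ℕ) - 1 : ℕ) : ℤ)) ((f ^ (m + 1)) v) :=
      (zpow_natCast_apply f _ _).symm
    rw [hrw, ← zpow_add_apply]
    have : (((n - 1 : ℕ) : ℤ)) + (m + 1) = 0 := by omega
    rw [this]
    simpa using hδ

lemma C_hetero [CompactSpace X] (hf : Continuous ⇑f)
    (hC : TwoSidedLimitShadowingWithGap f) (a b : X) {δ : ℝ} (hδ : 0 < δ) :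
    ∃ j j' n : ℕ, 1 ≤ n ∧ ChainConn f δ ((f ^ (-(j:ℤ))) a) ((f ^ (j':ℤ)) b) n := by
  obtain ⟨κ, hκ, hκδ, hκf⟩ := unif_mod f hf δ hδ
  set z : ℤ → X := fun i => if i ≤ 0 then (f ^ i) a else (f ^ i) b with hz
  have hzo : IsTwoSidedLimitPseudoOrbit f z := by
    apply tendsto_cofinite_of_finite (fun i => dist_nonneg)
    intro ε hε
    apply Set.Finite.subset (Set.finite_singleton (0 : ℤ))
    intro i hi
    simp only [Set.mem_setOf_eq] at hi
    by_contra h0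
    simp only [Set.mem_singleton_iff] at h0
    apply hi
    rcases lt_or_gt_of_ne h0 with h | h
    · have h1 : i ≤ 0 := by omega
      have h2 : i + 1 ≤ 0 := by omega
      simp only [hz, if_pos h1, if_pos h2, ← zpow_succ_apply, dist_self]
      exact hε
    · have h1 : ¬ (i ≤ 0) := by omega
      have h2 : ¬ (i + 1 ≤ 0) := by omega
      simp only [hz, if_neg h1, if_neg h2, ← zpow_succ_apply, dist_self]
      exact hε
  obtain ⟨N, hCC⟩ := hC
  obtain ⟨K, hK, y, hBot, hTop⟩ := hCC z hzo
  obtain ⟨Jb, hJb⟩ := Filter.eventually_atBot.mp (Metric.tendsto_nhds.mp hBot κ hκ)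
  obtain ⟨Jt, hJt⟩ := Filter.eventually_atTop.mp (Metric.tendsto_nhds.mp hTop δ hδ)
  set j : ℕ := (max (-Jb) 1).toNat with hj
  set j' : ℕ := (max Jt (1 + (K.natAbs : ℤ) + 1)).toNat with hj'
  have hjb : -(j : ℤ) ≤ Jb := by omega
  have hj't : Jt ≤ (j' : ℤ) := by omega
  have hj1 : 1 ≤ (j : ℤ) := by omega
  have hj'K : (K.natAbs : ℤ) + 2 ≤ (j' : ℤ) := by omega
  set nZ : ℤ := (j : ℤ) + K + (j' : ℤ) with hnZ
  have hnZ2 : 2 ≤ nZ := by omega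
  set n : ℕ := nZ.toNat with hn
  have hnn : (n : ℤ) = nZ := by omega
  refine ⟨j, j', n, by omega, chain_pattern (u' := (f ^ ((-(j:ℤ)) + 1)) y) (by omega) ?_ ?_⟩
  · -- first jump
    have hb' := hJb (-(j:ℤ)) hjb
    rw [dist_dist_zero] at hb'
    have hzj : z (-(j:ℤ)) = (f ^ (-(j:ℤ))) a := by
      simp only [hz, if_pos (by omega : -(j:ℤ) ≤ 0)]
    rw [hzj] at hb'
    have h2 := hκf _ _ (by rw [dist_comm]; exact hb')
    rw [← zpow_succ_apply, ← zpow_succ_apply] at h2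
    rw [← zpow_succ_apply]
    exact h2
  · -- last jump
    have ht' := hJt (j' : ℤ) hj't
    rw [dist_dist_zero] at ht'
    have hzj : z (j' : ℤ) = (f ^ (j':ℤ)) b := by
      simp only [hz, if_neg (by omega : ¬ ((j':ℤ) ≤ 0))]
    rw [hzj] at ht'
    have hrw : (⇑f)^[n - 1] ((f ^ ((-(j:ℤ)) + 1)) y)
        = (f ^ (((n - 1 : ℕ)) : ℤ)) ((f ^ ((-(j:ℤ)) + 1)) y) := (zpow_natCast_apply f _ _).symm
    rw [hrw, ← zpow_add_apply]
    have hexp : (((n - 1 : ℕ)) : ℤ) + ((-(j:ℤ)) + 1) = K + (j' : ℤ) := by omega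
    rw [hexp]
    exact ht'

lemma CT_of_C [CompactSpace X] (hf : Continuous ⇑f) (hf' : Continuous ⇑f.symm)
    (hC : TwoSidedLimitShadowingWithGap f) {δ : ℝ} (hδ : 0 < δ) (x v : X) :
    ∃ n, 1 ≤ n ∧ ChainConn f δ x v n := by
  obtain ⟨a, ha⟩ := exists_omegaPt (f := f) x
  obtain ⟨b, hb⟩ := exists_alphaPt (f := f) v
  obtain ⟨j, j', n, hn1, hmid⟩ := C_hetero hf hC a b hδ
  obtain ⟨n₁, -, hn₁1, hc₁⟩ := chain_to_omegaPt (omegaPt_shift hf hf' ha (-(j:ℤ))) hδ 1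
  obtain ⟨n₂, -, hn₂1, hc₂⟩ := chain_from_alphaPt hf (alphaPt_shift hf hf' hb (j':ℤ)) hδ 1
  exact ⟨n₁ + n + n₂, by omega, chain_trans (chain_trans hc₁ hmid) hc₂⟩

end S5

section S6

variable {X : Type*} [MetricSpace X] {f : X ≃ X}

/-- Finite tracking from the two-sided limit shadowing property with a gap. -/
lemma fintrack_of_C [CompactSpace X] (hf : Continuous ⇑f) (hf' : Continuous ⇑f.symm)
    (hC : TwoSidedLimitShadowingWithGap f) {ε : ℝ} (hε : 0 < ε) :
    ∃ δ : ℝ, 0 < δ ∧ ∀ (s : ℕ → X) (n : ℕ), IsChainSeg f δ s n →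
      ∃ p : X, ∀ t, t ≤ n → dist ((f ^ (t : ℤ)) p) (s t) ≤ ε := by
  by_contra hcon
  push_neg at hcon
  set δfun : ℕ → ℝ := fun k => (1/2 : ℝ)^k with hδfun
  have hδpos : ∀ k, 0 < δfun k := by intro k; rw [hδfun]; positivity
  have hδmono : ∀ j k, j ≤ k → δfun k ≤ δfun j := by
    intro j k hjk
    simp only [hδfun]
    exact pow_le_pow_of_le_one (by norm_num) (by norm_num) hjk
  have hh : ∀ k : ℕ, ∃ (s : ℕ → X) (n : ℕ), IsChainSeg f (δfun k) s n ∧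
      ∀ p : X, ∃ t, t ≤ n ∧ ε < dist ((f ^ (t : ℤ)) p) (s t) := by
    intro k
    obtain ⟨s, n, h1, h2⟩ := hcon (δfun k) (hδpos k)
    exact ⟨s, n, h1, h2⟩
  choose s n hseg hbad using hh
  -- bridges between consecutive bad segments
  have hbr : ∀ k : ℕ, ∃ (m : ℕ) (b : ℕ → X), 1 ≤ m ∧ b 0 = s k (n k) ∧ b m = s (k+1) 0 ∧
      IsChainSeg f (δfun (k+1)) b m := by
    intro k
    obtain ⟨mm, hmm, bb, h0, hmB, hbs⟩ := CT_of_C hf hf' hC (hδpos (k+1)) (s k (n k)) (s (k+1) 0)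
    exact ⟨mm, bb, hmm, h0, hmB, hbs⟩
  choose m b hm hb0 hbm hbseg using hbr
  -- blocks
  set L : ℕ → ℕ := fun k => n k + m k with hL
  set B : ℕ → ℕ → X := fun k t => if t < n k then s k t else b k (t - n k) with hB
  have hBval : ∀ k t, t ≤ n k → B k t = s k t := by
    intro k t ht
    rcases lt_or_eq_of_le ht with h | h
    · simp only [hB, if_pos h]
    · subst h
      simp only [hB, if_neg (lt_irrefl _), Nat.sub_self, hb0]
  have hBL : ∀ k, B k (L k) = s (k+1) 0 := by
    intro k
    have h1 : ¬ (L k < n k) := by simp only [hL]; omega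
    simp only [hB, if_neg h1, hL, Nat.add_sub_cancel_left, hbm]
    exact if_neg h1
  have hBjump : ∀ k t, t < L k → dist (f (B k t)) (B k (t+1)) < δfun k := by
    intro k t ht
    rcases lt_or_ge t (n k) with h | h
    · rw [hBval k t (le_of_lt h), hBval k (t+1) (by omega)]
      exact hseg k t h
    · have h1 : ¬ (t < n k) := by omega
      have h2 : ¬ (t + 1 < n k) := by omega
      simp only [hB, if_neg h1, if_neg h2]
      have h3 : t + 1 - n k = (t - n k) + 1 := by omega
      rw [h3]
      refine lt_of_lt_of_le (hbseg k (t - n k) ?_) (hδmono k (k+1) (by omega))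
      simp only [hL] at ht; omega
  -- positions of the blocks
  set a : ℕ → ℕ := fun k => Nat.rec 0 (fun j ih => ih + L j) k with ha
  have ha0 : a 0 = 0 := rfl
  have haS : ∀ k, a (k+1) = a k + L k := fun k => rfl
  have hL1 : ∀ k, 1 ≤ L k := by intro k; have := hm k; simp only [hL]; omega
  have hak : ∀ k, k ≤ a k := by
    intro k
    induction k with
    | zero => omega
    | succ j ih =>
        have h2 : a (j+1) = a j + L j := haS j
        have h3 : 1 ≤ L j := hL1 j
        omega
  have hamono : ∀ j k, j ≤ k → a j ≤ a k := by
    intro j k hjk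
    induction k with
    | zero =>
        have hj : j = 0 := by omega
        subst hj; exact le_rfl
    | succ i ih =>
        rcases Nat.lt_or_ge j (i+1) with h | h
        · have h2 := ih (by omega)
          have h3 : a (i+1) = a i + L i := haS i
          have h4 := hL1 i
          omega
        · have hj : j = i + 1 := by omega
          subst hj; exact le_rfl
  classical
  set idx : ℕ → ℕ := fun t => Nat.findGreatest (fun k => a k ≤ t) t with hidx
  have hidx1 : ∀ t, a (idx t) ≤ t := by
    intro t
    exact Nat.findGreatest_spec (P := fun k => a k ≤ t) (Nat.zero_le t)
      (show a 0 ≤ t by rw [ha0]; exact Nat.zero_le t)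
  have hidx_ge : ∀ k t, a k ≤ t → k ≤ idx t :=
    fun k t h => Nat.le_findGreatest (P := fun k => a k ≤ t) (le_trans (hak k) h) h
  have hidx2 : ∀ t, t < a (idx t + 1) := by
    intro t
    by_contra hcon2
    push_neg at hcon2
    have h2 := hidx_ge (idx t + 1) t hcon2
    omega
  have hidx_eq : ∀ k t, a k ≤ t → t < a (k+1) → idx t = k := by
    intro k t h1 h2
    have hge := hidx_ge k t h1
    by_contra hne
    have hgt : k + 1 ≤ idx t := by omega
    have h3 := hamono (k+1) (idx t) hgt
    have h4 := hidx1 t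
    omega
  set w : ℕ → X := fun t => B (idx t) (t - a (idx t)) with hw
  have hwseg : ∀ k t, t ≤ n k → w (a k + t) = s k t := by
    intro k t ht
    have h1 : a k ≤ a k + t := by omega
    have h2 : a k + t < a (k+1) := by
      rw [haS]
      have := hm k
      simp only [hL]
      omega
    have h3 : idx (a k + t) = k := hidx_eq k _ h1 h2
    simp only [hw, h3, Nat.add_sub_cancel_left]
    exact hBval k t ht
  have hwjump : ∀ t, dist (f (w t)) (w (t+1)) < δfun (idx t) := by
    intro t
    have h1 : a (idx t) ≤ t := hidx1 t
    have h2 : t < a (idx t + 1) := hidx2 t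
    have hpos : t - a (idx t) < L (idx t) := by rw [haS] at h2; omega
    rcases Nat.lt_or_ge (t+1) (a (idx t + 1)) with h3 | h3
    · have h4 : idx (t+1) = idx t := hidx_eq (idx t) _ (by omega) h3
      simp only [hw, h4]
      have h5 : t + 1 - a (idx t) = (t - a (idx t)) + 1 := by omega
      rw [h5]
      exact hBjump (idx t) _ hpos
    · have h4 : t + 1 = a (idx t + 1) := by omega
      have h5 : idx (t+1) = idx t + 1 := by
        refine hidx_eq (idx t + 1) _ (by omega) ?_
        rw [haS (idx t + 1)]
        have := hL1 (idx t + 1)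
        omega
      simp only [hw, h5]
      have h6 : t + 1 - a (idx t + 1) = 0 := by omega
      rw [h6]
      have h7 : B (idx t + 1) 0 = B (idx t) (L (idx t)) := by
        rw [hBL (idx t), hBval (idx t + 1) 0 (Nat.zero_le _)]
      have h8 : t - a (idx t) + 1 = L (idx t) := by rw [haS] at h4; omega
      have h9 := hBjump (idx t) (t - a (idx t)) hpos
      rw [h8] at h9
      rw [h7]
      exact h9
  -- the glued two-sided limit pseudo-orbit
  set z : ℤ → X := fun i => if 0 ≤ i then w i.toNat else (f ^ i) (w 0) with hz
  have hzw : ∀ i : ℤ, 0 ≤ i → z i = w i.toNat := by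
    intro i hi; simp only [hz, if_pos hi]
  have hzo : IsTwoSidedLimitPseudoOrbit f z := by
    apply tendsto_cofinite_of_finite (fun i => dist_nonneg)
    intro η hη
    obtain ⟨k₀, hk₀⟩ := exists_pow_lt_of_lt_one hη (by norm_num : (1/2 : ℝ) < 1)
    apply Set.Finite.subset (Set.finite_Icc (0 : ℤ) (a k₀))
    intro i hi
    simp only [Set.mem_setOf_eq] at hi
    rw [Set.mem_Icc]
    by_contra hrange
    push_neg at hrange
    apply hi
    rcases lt_or_ge i 0 with hneg | hposi
    · have h1 : ¬ (0 ≤ i) := by omega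
      have hz1 : z (i+1) = (f ^ (i+1)) (w 0) := by
        rcases eq_or_lt_of_le (by omega : i + 1 ≤ 0) with h2 | h2
        · rw [hzw (i+1) (by omega)]
          have h3 : (i+1).toNat = 0 := by omega
          rw [h3, h2]
          simp
        · simp only [hz, if_neg (by omega : ¬ (0:ℤ) ≤ i + 1)]
      have hz0 : z i = (f ^ i) (w 0) := by simp only [hz, if_neg h1]
      rw [hz0, hz1, ← zpow_succ_apply, dist_self]
      exact hη
    · have hgt : (a k₀ : ℤ) < i := hrange hposi
      rw [hzw i (by omega), hzw (i+1) (by omega)]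
      have h1 : (i+1).toNat = i.toNat + 1 := by omega
      rw [h1]
      have h2 : a k₀ ≤ i.toNat := by omega
      have h3 : k₀ ≤ idx i.toNat := hidx_ge k₀ _ h2
      calc dist (f (w i.toNat)) (w (i.toNat + 1)) < δfun (idx i.toNat) := hwjump _
        _ ≤ δfun k₀ := hδmono _ _ h3
        _ < η := by rw [hδfun]; exact hk₀
  -- shadow it and find a contradiction with some bad segment
  obtain ⟨N, hCC⟩ := hC
  obtain ⟨K, hK, y, hBot, hTop⟩ := hCC z hzo
  obtain ⟨I, hI⟩ := Filter.eventually_atTop.mp (Metric.tendsto_nhds.mp hTop ε hε)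
  set k₁ : ℕ := I.toNat with hk₁
  have haI : I ≤ (a k₁ : ℤ) := by have := hak k₁; omega
  set p : X := (f ^ (K + (a k₁ : ℤ))) y with hp
  obtain ⟨t, htn, hbadt⟩ := hbad k₁ p
  have hcomp : (f ^ (t:ℤ)) p = (f ^ (K + ((a k₁ : ℤ) + t))) y := by
    rw [hp, ← zpow_add_apply]
    congr 1
    ring
  have hzval : z ((a k₁ : ℤ) + t) = s k₁ t := by
    rw [hzw _ (by omega)]
    have h0 : ((a k₁ : ℤ) + t).toNat = a k₁ + t := by omega
    rw [h0]
    exact hwseg k₁ t htn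
  have hI2 := hI ((a k₁ : ℤ) + t) (by omega)
  rw [dist_dist_zero, hzval] at hI2
  rw [hcomp] at hbadt
  linarith

/-- Finite tracking implies the two-sided shadowing property. -/
lemma shadowing_of_fintrack [CompactSpace X] (hf : Continuous ⇑f) (hf' : Continuous ⇑f.symm)
    (hFT : ∀ ε : ℝ, 0 < ε → ∃ δ : ℝ, 0 < δ ∧ ∀ (s : ℕ → X) (n : ℕ), IsChainSeg f δ s n →
      ∃ p : X, ∀ t, t ≤ n → dist ((f ^ (t : ℤ)) p) (s t) ≤ ε) :
    ShadowingPropertyZ f := by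
  intro ε hε
  obtain ⟨δ, hδ, hft⟩ := hFT (ε/2) (by linarith)
  refine ⟨δ, hδ, ?_⟩
  intro x hx
  have hsegs : ∀ k : ℕ, ∃ p : X, ∀ t, t ≤ 2 * k →
      dist ((f ^ (t : ℤ)) p) (x ((t : ℤ) - k)) ≤ ε/2 := by
    intro k
    refine hft (fun t => x ((t : ℤ) - k)) (2 * k) ?_
    intro t ht
    have h1 : ((t + 1 : ℕ) : ℤ) - k = ((t : ℤ) - k) + 1 := by push_cast; ring
    have := hx ((t : ℤ) - k)
    rw [← h1] at this
    exact this
  choose p hp using hsegs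
  set q : ℕ → X := fun k => (f ^ (k : ℤ)) (p k) with hq
  have hqd : ∀ (i : ℤ) (k : ℕ), i.natAbs ≤ k → dist ((f ^ i) (q k)) (x i) ≤ ε/2 := by
    intro i k hik
    have h1 : (f ^ i) (q k) = (f ^ ((((i + k).toNat : ℕ)) : ℤ)) (p k) := by
      rw [hq, ← zpow_add_apply]
      conv_lhs => rw [show i + (k:ℤ) = (((i + k).toNat : ℕ) : ℤ) by omega]
    have h2 := hp k (i + k).toNat (by omega)
    rw [h1]
    have h3 : (((i + k).toNat : ℤ)) - k = i := by omega
    rw [h3] at h2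
    exact h2
  obtain ⟨y, φ, hφ, hten⟩ := seq_compact q
  refine ⟨y, ?_⟩
  intro i
  have hle : dist ((f ^ i) y) (x i) ≤ ε/2 := by
    have htend : Filter.Tendsto (fun l => dist ((f ^ i) (q (φ l))) (x i)) Filter.atTop
        (𝓝 (dist ((f ^ i) y) (x i))) := by
      apply Filter.Tendsto.dist _ tendsto_const_nhds
      exact ((continuous_zpow f hf hf' i).tendsto y).comp hten
    refine le_of_tendsto htend ?_
    rw [Filter.eventually_atTop]
    refine ⟨i.natAbs, fun l hl => ?_⟩
    exact hqd i (φ l) (le_trans hl (hφ.le_apply))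
  linarith

lemma shadowing_of_C [CompactSpace X] (hf : Continuous ⇑f) (hf' : Continuous ⇑f.symm)
    (hC : TwoSidedLimitShadowingWithGap f) : ShadowingPropertyZ f :=
  shadowing_of_fintrack hf hf' (fun ε hε => fintrack_of_C hf hf' hC hε)

lemma transitive_of_C [CompactSpace X] (hf : Continuous ⇑f) (hf' : Continuous ⇑f.symm)
    (hC : TwoSidedLimitShadowingWithGap f) : TopologicallyTransitive ⇑f :=
  transitive_of_chains (shadowing_of_C hf hf' hC)
    (fun δ hδ p q => CT_of_C hf hf' hC hδ p q)

end S6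

section S7

variable {X : Type*} [MetricSpace X] {f : X ≃ X}

lemma uniform_expansive [CompactSpace X] (hf : Continuous ⇑f) (hf' : Continuous ⇑f.symm)
    {c : ℝ} (hc : 0 < c)
    (hexp : ∀ u w : X, (∀ n : ℤ, dist ((f ^ n) u) ((f ^ n) w) ≤ c) → u = w)
    {ρ : ℝ} (hρ : 0 < ρ) :
    ∃ N : ℕ, ∀ u w : X, (∀ j : ℤ, j.natAbs ≤ N → dist ((f ^ j) u) ((f ^ j) w) ≤ c) →
      dist u w ≤ ρ := by
  by_contra h
  push_neg at h
  choose u w hcl hfar using h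
  obtain ⟨A, φ, hφ, hA⟩ := seq_compact u
  obtain ⟨Bp, ψ, hψ, hB⟩ := seq_compact (w ∘ φ)
  set θ : ℕ → ℕ := φ ∘ ψ with hθ
  have hθmono : StrictMono θ := hφ.comp hψ
  have hAt : Filter.Tendsto (u ∘ θ) Filter.atTop (𝓝 A) := hA.comp hψ.tendsto_atTop
  have hBt : Filter.Tendsto (w ∘ θ) Filter.atTop (𝓝 Bp) := hB
  have hclose : ∀ j : ℤ, dist ((f ^ j) A) ((f ^ j) Bp) ≤ c := by
    intro j
    have htd : Filter.Tendsto (fun l => dist ((f ^ j) (u (θ l))) ((f ^ j) (w (θ l))))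
        Filter.atTop (𝓝 (dist ((f ^ j) A) ((f ^ j) Bp))) :=
      Filter.Tendsto.dist (((continuous_zpow f hf hf' j).tendsto A).comp hAt)
        (((continuous_zpow f hf hf' j).tendsto Bp).comp hBt)
    refine le_of_tendsto htd ?_
    rw [Filter.eventually_atTop]
    refine ⟨j.natAbs, fun l hl => ?_⟩
    exact hcl (θ l) j (le_trans hl (hθmono.le_apply))
  have hAB : A = Bp := hexp A Bp hclose
  have hfar2 : ρ ≤ dist A Bp := by
    have htd : Filter.Tendsto (fun l => dist (u (θ l)) (w (θ l))) Filter.atTop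
        (𝓝 (dist A Bp)) := Filter.Tendsto.dist hAt hBt
    refine ge_of_tendsto htd ?_
    rw [Filter.eventually_atTop]
    exact ⟨0, fun l _ => le_of_lt (hfar (θ l))⟩
  rw [hAB, dist_self] at hfar2
  linarith

lemma chain_exact [CompactSpace X] (hf : Continuous ⇑f)
    (hmix : TopologicallyMixing ⇑f) {δ : ℝ} (hδ : 0 < δ) :
    ∃ M : ℕ, 2 ≤ M ∧ ∀ p q : X, ∀ n, M ≤ n → ChainConn f δ p q n := by
  classical
  obtain ⟨κ, hκ, hκδ, hκf⟩ := unif_mod f hf δ hδ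
  set r : ℝ := min (κ/2) (δ/2) with hr
  have hrpos : 0 < r := lt_min (by linarith) (by linarith)
  have htb : TotallyBounded (Set.univ : Set X) := isCompact_univ.totallyBounded
  obtain ⟨T, hTfin, hTcov⟩ := Metric.totallyBounded_iff.mp htb r hrpos
  set gN : X → X → ℕ := fun e e' =>
    (hmix (Metric.ball e r) (Metric.ball e' r) Metric.isOpen_ball Metric.isOpen_ball
      ⟨e, Metric.mem_ball_self hrpos⟩ ⟨e', Metric.mem_ball_self hrpos⟩).choose with hgN
  have hgNspec : ∀ e e' : X, ∀ n, gN e e' ≤ n →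
      ((⇑f)^[n] '' Metric.ball e r ∩ Metric.ball e' r).Nonempty := fun e e' =>
    (hmix (Metric.ball e r) (Metric.ball e' r) Metric.isOpen_ball Metric.isOpen_ball
      ⟨e, Metric.mem_ball_self hrpos⟩ ⟨e', Metric.mem_ball_self hrpos⟩).choose_spec
  set M : ℕ := 2 + (hTfin.toFinset ×ˢ hTfin.toFinset).sup (fun ee => gN ee.1 ee.2) with hM
  refine ⟨M, by omega, ?_⟩
  intro p q n hn
  have hp := hTcov (Set.mem_univ p)
  have hq := hTcov (Set.mem_univ q)
  simp only [Set.mem_iUnion] at hp hq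
  obtain ⟨e, heT, hpe⟩ := hp
  obtain ⟨e', heT', hqe⟩ := hq
  have hle : gN e e' ≤ n := by
    have h1 : (e, e') ∈ hTfin.toFinset ×ˢ hTfin.toFinset := by
      rw [Finset.mem_product, Set.Finite.mem_toFinset, Set.Finite.mem_toFinset]
      exact ⟨heT, heT'⟩
    have h2 := Finset.le_sup (f := fun ee : X × X => gN ee.1 ee.2) h1
    simp only at h2
    omega
  obtain ⟨v, ⟨uu, huu, rfl⟩, hv⟩ := hgNspec e e' n hle
  refine chain_pattern (u' := f uu) (by omega) ?_ ?_
  · refine hκf p uu ?_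
    have h1 : dist p e < r := Metric.mem_ball.mp hpe
    have h2 : dist uu e < r := Metric.mem_ball.mp huu
    calc dist p uu ≤ dist p e + dist e uu := dist_triangle _ _ _
      _ = dist p e + dist uu e := by rw [dist_comm e uu]
      _ < r + r := by linarith
      _ ≤ κ := by rw [hr]; have := min_le_left (κ/2) (δ/2); linarith
  · have h1 : (⇑f)^[n - 1] (f uu) = (⇑f)^[n] uu := by
      rw [← Function.iterate_succ_apply]
      congr 1; omega
    rw [h1]
    have h2 : dist ((⇑f)^[n] uu) e' < r := Metric.mem_ball.mp hv
    have h3 : dist e' q < r := by rw [dist_comm]; exact Metric.mem_ball.mp hqe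
    calc dist ((⇑f)^[n] uu) q ≤ dist ((⇑f)^[n] uu) e' + dist e' q := dist_triangle _ _ _
      _ < r + r := by linarith
      _ ≤ δ := by rw [hr]; have := min_le_right (κ/2) (δ/2); linarith

lemma tail_track [CompactSpace X] (hf : Continuous ⇑f) (hf' : Continuous ⇑f.symm)
    {c : ℝ} (hc : 0 < c)
    (hexp : ∀ u w : X, (∀ n : ℤ, dist ((f ^ n) u) ((f ^ n) w) ≤ c) → u = w)
    (SH : ShadowingPropertyZ f) {z : ℤ → X}
    (htail : ∀ η : ℝ, 0 < η → ∃ M : ℕ, ∀ i : ℤ, M ≤ i.natAbs →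
      dist (f (z i)) (z (i + 1)) < η)
    {y : X} (hy : ∀ i : ℤ, dist ((f ^ i) y) (z i) < c/2) :
    ∀ ρ : ℝ, 0 < ρ → ∃ I : ℕ, ∀ i : ℤ, I ≤ i.natAbs → dist ((f ^ i) y) (z i) < ρ := by
  intro ρ hρ
  set ε' : ℝ := min (ρ/4) (c/2) with hε'
  have hε'pos : 0 < ε' := lt_min (by linarith) (by linarith)
  obtain ⟨δs, hδs, hsh⟩ := SH ε' hε'pos
  obtain ⟨N, hN⟩ := uniform_expansive hf hf' hc hexp (show (0:ℝ) < ρ/4 by linarith)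
  obtain ⟨M, hM⟩ := htail δs hδs
  refine ⟨M + N + 1, ?_⟩
  intro i hi
  set wseq : ℤ → X := fun j => if j < -(N:ℤ) then (f ^ (j + N)) (z (i - N))
    else if (N:ℤ) < j then (f ^ (j - N)) (z (i + N)) else z (i + j) with hwseq
  have hwmid : ∀ j : ℤ, j.natAbs ≤ N → wseq j = z (i + j) := by
    intro j hj
    simp only [hwseq, if_neg (by omega : ¬ j < -(N:ℤ)), if_neg (by omega : ¬ (N:ℤ) < j)]
  have hwpo : ∀ j : ℤ, dist (f (wseq j)) (wseq (j + 1)) < δs := by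
    intro j
    rcases lt_or_ge j (-(N:ℤ) - 1) with h1 | h1
    · have ha : j < -(N:ℤ) := by omega
      have hb : j + 1 < -(N:ℤ) := by omega
      simp only [hwseq, if_pos ha, if_pos hb]
      rw [show j + 1 + (N:ℤ) = (j + N) + 1 by ring, zpow_succ_apply, dist_self]
      exact hδs
    · rcases eq_or_lt_of_le h1 with h2 | h2
      · -- j = -N - 1
        have ha : j < -(N:ℤ) := by omega
        have hb : ¬ (j + 1 < -(N:ℤ)) := by omega
        have hb' : ¬ ((N:ℤ) < j + 1) := by omega
        simp only [hwseq, if_pos ha, if_neg hb, if_neg hb']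
        rw [show j + (N:ℤ) = -1 by omega, show i + (j+1) = i - N by omega,
          ← zpow_succ_apply]
        norm_num
        exact hδs
      · rcases lt_or_ge j (N:ℤ) with h3 | h3
        · -- middle
          have ha : ¬ (j < -(N:ℤ)) := by omega
          have hb : ¬ ((N:ℤ) < j) := by omega
          have hc1 : ¬ (j + 1 < -(N:ℤ)) := by omega
          have hd : ¬ ((N:ℤ) < j + 1) := by omega
          simp only [hwseq, if_neg ha, if_neg hb, if_neg hc1, if_neg hd]
          rw [show i + (j + 1) = (i + j) + 1 by ring]
          refine hM (i + j) ?_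
          omega
        · rcases eq_or_lt_of_le h3 with h4 | h4
          · -- j = N
            have ha : ¬ (j < -(N:ℤ)) := by omega
            have hb : ¬ ((N:ℤ) < j) := by omega
            have hc1 : ¬ (j + 1 < -(N:ℤ)) := by omega
            have hd : (N:ℤ) < j + 1 := by omega
            simp only [hwseq, if_neg ha, if_neg hb, if_neg hc1, if_pos hd]
            rw [show j + 1 - (N:ℤ) = 1 by omega, ← h4, show i + (N:ℤ) = i + N by rfl]
            rw [zpow_one]
            rw [dist_self]
            exact hδs
          · -- j > N
            have ha : ¬ (j < -(N:ℤ)) := by omega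
            have hb : (N:ℤ) < j := h4
            have hc1 : ¬ (j + 1 < -(N:ℤ)) := by omega
            have hd : (N:ℤ) < j + 1 := by omega
            simp only [hwseq, if_neg ha, if_pos hb, if_neg hc1, if_pos hd]
            rw [show j + 1 - (N:ℤ) = (j - N) + 1 by ring, zpow_succ_apply, dist_self]
            exact hδs
  obtain ⟨b, hb⟩ := hsh wseq hwpo
  have hueapp : dist b ((f ^ i) y) ≤ ρ/4 := by
    refine hN b ((f ^ i) y) ?_
    intro j hj
    have h1 : dist ((f ^ j) b) (wseq j) < ε' := hb j
    rw [hwmid j hj] at h1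
    have h2 : (f ^ j) ((f ^ i) y) = (f ^ (i + j)) y := by
      rw [← zpow_add_apply, show j + i = i + j by ring]
    have h3 : dist ((f ^ (i+j)) y) (z (i + j)) < c/2 := hy (i + j)
    calc dist ((f ^ j) b) ((f ^ j) ((f ^ i) y))
        ≤ dist ((f ^ j) b) (z (i + j)) + dist (z (i + j)) ((f ^ j) ((f ^ i) y)) :=
          dist_triangle _ _ _
      _ ≤ ε' + c/2 := by
          rw [h2, dist_comm (z (i+j))]
          have := le_of_lt h3
          linarith [le_of_lt h1]
      _ ≤ c := by
          have := min_le_right (ρ/4) (c/2)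
          rw [hε']
          linarith [min_le_right (ρ/4) (c/2)]
  have hb0 : dist b (z i) < ε' := by
    have := hb 0
    rw [hwmid 0 (by omega)] at this
    simpa using this
  calc dist ((f ^ i) y) (z i) ≤ dist ((f ^ i) y) b + dist b (z i) := dist_triangle _ _ _
    _ ≤ ρ/4 + ε' := by
        rw [dist_comm ((f ^ i) y) b]
        linarith [le_of_lt hb0]
    _ < ρ := by
        have := min_le_left (ρ/4) (c/2)
        rw [hε']
        linarith [min_le_left (ρ/4) (c/2)]

/-- Mixing + shadowing + expansive implies two-sided limit shadowing (gap 0). -/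
lemma tsls_of_mixing [CompactSpace X] (hf : Continuous ⇑f) (hf' : Continuous ⇑f.symm)
    {c : ℝ} (hc : 0 < c)
    (hexp : ∀ u w : X, (∀ n : ℤ, dist ((f ^ n) u) ((f ^ n) w) ≤ c) → u = w)
    (hmix : TopologicallyMixing ⇑f) (SH : ShadowingPropertyZ f) :
    TwoSidedLimitShadowing f := by
  intro x hx
  obtain ⟨δ, hδpos, hsh⟩ := SH (c/2) (by linarith)
  obtain ⟨M₂, hM₂2, hchainM⟩ := chain_exact hf hmix hδpos
  obtain ⟨M₁, hM₁⟩ := tail_small hx hδpos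
  set m : ℕ := max (M₁ + 1) M₂ with hm
  have hm1 : 1 ≤ m := by omega
  obtain ⟨sc, hsc0, hscn, hscseg⟩ := hchainM (x (-(m:ℤ))) (x (m:ℤ)) (2*m) (by omega)
  set z : ℤ → X := fun i => if -(m:ℤ) ≤ i ∧ i ≤ (m:ℤ) then sc ((i + m).toNat) else x i with hz
  have hz_hi : ∀ i : ℤ, (m:ℤ) ≤ i → z i = x i := by
    intro i hi
    rcases eq_or_lt_of_le hi with h | h
    · simp only [hz, if_pos (by constructor <;> omega : -(m:ℤ) ≤ i ∧ i ≤ (m:ℤ))]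
      rw [show (i + m).toNat = 2*m by omega, hscn, ← h]
    · simp only [hz, if_neg (by omega : ¬ (-(m:ℤ) ≤ i ∧ i ≤ (m:ℤ)))]
  have hz_lo : ∀ i : ℤ, i ≤ -(m:ℤ) → z i = x i := by
    intro i hi
    rcases eq_or_lt_of_le hi with h | h
    · simp only [hz, if_pos (by constructor <;> omega : -(m:ℤ) ≤ i ∧ i ≤ (m:ℤ))]
      rw [show (i + m).toNat = 0 by omega, hsc0, h]
    · simp only [hz, if_neg (by omega : ¬ (-(m:ℤ) ≤ i ∧ i ≤ (m:ℤ)))]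
  have hzpo : ∀ i : ℤ, dist (f (z i)) (z (i + 1)) < δ := by
    intro i
    rcases lt_or_ge i (-(m:ℤ)) with h1 | h1
    · rw [hz_lo i (by omega), hz_lo (i+1) (by omega)]
      exact hM₁ i (by omega)
    · rcases lt_or_ge i (m:ℤ) with h2 | h2
      · have hcnd : -(m:ℤ) ≤ i ∧ i ≤ (m:ℤ) := by constructor <;> omega
        have hcnd' : -(m:ℤ) ≤ i + 1 ∧ i + 1 ≤ (m:ℤ) := by constructor <;> omega
        simp only [hz, if_pos hcnd, if_pos hcnd']
        rw [show (i + 1 + m).toNat = (i + m).toNat + 1 by omega]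
        exact hscseg ((i + m).toNat) (by omega)
      · rw [hz_hi i h2, hz_hi (i+1) (by omega)]
        exact hM₁ i (by omega)
  obtain ⟨y, hy⟩ := hsh z hzpo
  have htail : ∀ η : ℝ, 0 < η → ∃ M : ℕ, ∀ i : ℤ, M ≤ i.natAbs →
      dist (f (z i)) (z (i + 1)) < η := by
    intro η hη
    obtain ⟨M₀, hM₀⟩ := tail_small hx hη
    refine ⟨max M₀ (m + 1), fun i hi => ?_⟩
    rcases lt_or_ge i 0 with h | h
    · rw [hz_lo i (by omega), hz_lo (i+1) (by omega)]
      exact hM₀ i (by omega)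
    · rw [hz_hi i (by omega), hz_hi (i+1) (by omega)]
      exact hM₀ i (by omega)
  have htt := tail_track hf hf' hc hexp SH htail hy
  refine ⟨y, ?_, ?_⟩
  · rw [Metric.tendsto_nhds]
    intro ρ hρ
    obtain ⟨I, hI⟩ := htt ρ hρ
    rw [Filter.eventually_atBot]
    refine ⟨-(I:ℤ) - m - 1, fun i hi => ?_⟩
    rw [dist_dist_zero, ← hz_lo i (by omega)]
    exact hI i (by omega)
  · rw [Metric.tendsto_nhds]
    intro ρ hρ
    obtain ⟨I, hI⟩ := htt ρ hρ
    rw [Filter.eventually_atTop]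
    refine ⟨(I:ℤ) + m + 1, fun i hi => ?_⟩
    rw [dist_dist_zero, ← hz_hi i (by omega), zero_add]
    exact hI i (by omega)

end S7

end TSLSAux

/-- For an expansive homeomorphism of a compact connected metric space the following
are equivalent: (1) transitivity and shadowing; (2) mixing and shadowing; (3) two-sided
limit shadowing with a gap; (4) two-sided limit shadowing. -/
theorem stmt15 [CompactSpace X] [ConnectedSpace X] (f : X ≃ₜ X)
    (he : Expansive f.toEquiv) :
    ((TopologicallyTransitive ⇑f ∧ ShadowingPropertyZ f.toEquiv) ↔
      (TopologicallyMixing ⇑f ∧ ShadowingPropertyZ f.toEquiv)) ∧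
    ((TopologicallyMixing ⇑f ∧ ShadowingPropertyZ f.toEquiv) ↔
      TwoSidedLimitShadowingWithGap f.toEquiv) ∧
    (TwoSidedLimitShadowingWithGap f.toEquiv ↔
      TwoSidedLimitShadowing f.toEquiv) := by
  obtain ⟨c, hc, hexp⟩ := he
  have hcoe : ⇑f.toEquiv = ⇑f := rfl
  have hfc : Continuous ⇑f.toEquiv := f.continuous
  have hfc' : Continuous ⇑f.toEquiv.symm := f.symm.continuous
  have hBA : TopologicallyMixing ⇑f → TopologicallyTransitive ⇑f := by
    intro hmix U V hU hV hUne hVne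
    obtain ⟨N, hN⟩ := hmix U V hU hV hUne hVne
    exact ⟨N + 1, by omega, hN (N + 1) (by omega)⟩
  have hAB : TopologicallyTransitive ⇑f → ShadowingPropertyZ f.toEquiv →
      TopologicallyMixing ⇑f := by
    intro htr SH
    have htr' : TopologicallyTransitive ⇑f.toEquiv := by rw [hcoe]; exact htr
    have := TSLSAux.mixing_of_chains SH
      (fun δ hδ p q => TSLSAux.chainmixing_of_transitive hfc htr' hδ p q)
    rwa [hcoe] at this
  have hBD : TopologicallyMixing ⇑f → ShadowingPropertyZ f.toEquiv →
      TwoSidedLimitShadowing f.toEquiv := by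
    intro hmix SH
    have hmix' : TopologicallyMixing ⇑f.toEquiv := by rw [hcoe]; exact hmix
    exact TSLSAux.tsls_of_mixing hfc hfc' hc hexp hmix' SH
  have hDC : TwoSidedLimitShadowing f.toEquiv → TwoSidedLimitShadowingWithGap f.toEquiv := by
    intro h
    exact ⟨0, fun x hx => ⟨0, by simp, h x hx⟩⟩
  have hCsh : TwoSidedLimitShadowingWithGap f.toEquiv → ShadowingPropertyZ f.toEquiv :=
    fun hC => TSLSAux.shadowing_of_C hfc hfc' hC
  have hCtr : TwoSidedLimitShadowingWithGap f.toEquiv → TopologicallyTransitive ⇑f := by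
    intro hC
    have := TSLSAux.transitive_of_C hfc hfc' hC
    rwa [hcoe] at this
  refine ⟨⟨fun h => ⟨hAB h.1 h.2, h.2⟩, fun h => ⟨hBA h.1, h.2⟩⟩, ?_, ?_⟩
  · constructor
    · intro h
      exact hDC (hBD h.1 h.2)
    · intro hC
      exact ⟨hAB (hCtr hC) (hCsh hC), hCsh hC⟩
  · constructor
    · intro hC
      exact hBD (hAB (hCtr hC) (hCsh hC)) (hCsh hC)
    · exact hDC
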